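/- arXiv:1209.1767 — 5 statements merged into one kernel-verified Lean document; each statement's English description precedes it below -/
import Mathlib

section
/- Let H be a Hilbert space and M, N closed subspaces. The gap δ̂(M,N) := max{δ(M,N), δ(N,M)} equals the operator norm ‖P_M − P_N‖, where P_M and P_N are the orthogonal projections onto M and N respectively. -/
noncomputable section

open ContinuousLinearMap

/-- δ(M,N) = sup{dist(x,N) : x ∈ M, ‖x‖ = 1}, with sSup ∅ = 0 covering M = {0}. -/
def gapDelta {H : Type*} [NormedAddCommGroup H] (M N : Set H) : ℝ :=
  sSup ((fun x => Metric.infDist x N) '' {x | x ∈ M ∧ ‖x‖ = 1})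

/-- The gap δ̂(M,N) = max{δ(M,N), δ(N,M)}. -/
def gapHat {H : Type*} [NormedAddCommGroup H] (M N : Set H) : ℝ :=
  max (gapDelta M N) (gapDelta N M)

/-- Orthogonal projection onto a closed subspace, as an operator H →L[ℂ] H. -/
def projCLM {H : Type*} [NormedAddCommGroup H] [InnerProductSpace ℂ H] [CompleteSpace H]
    (K : Submodule ℂ H) (hK : IsClosed (K : Set H)) : H →L[ℂ] H :=
  haveI := hK.completeSpace_coe
  K.subtypeL.comp K.orthogonalProjectionOnto

/-- G is the outer inverse A_{T,S}^{(2)}: GAG = G, R(G) = T, N(G) = S. -/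
def IsOuterInv {X Y : Type*} [NormedAddCommGroup X] [NormedSpace ℂ X]
    [NormedAddCommGroup Y] [NormedSpace ℂ Y]
    (A : X →L[ℂ] Y) (T : Submodule ℂ X) (S : Submodule ℂ Y) (G : Y →L[ℂ] X) : Prop :=
  G ∘L (A ∘L G) = G ∧ LinearMap.range (G : Y →ₗ[ℂ] X) = T ∧ LinearMap.ker (G : Y →ₗ[ℂ] X) = S

/-- B is the Moore–Penrose inverse of A. -/
def IsMPInv {X Y : Type*} [NormedAddCommGroup X] [InnerProductSpace ℂ X] [CompleteSpace X]
    [NormedAddCommGroup Y] [InnerProductSpace ℂ Y] [CompleteSpace Y]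
    (A : X →L[ℂ] Y) (B : Y →L[ℂ] X) : Prop :=
  A ∘L (B ∘L A) = A ∧ B ∘L (A ∘L B) = B ∧
  adjoint (A ∘L B) = A ∘L B ∧ adjoint (B ∘L A) = B ∘L A

section Helpers

variable {H : Type*} [NormedAddCommGroup H] [InnerProductSpace ℂ H] [CompleteSpace H]

lemma projCLM_mem (K : Submodule ℂ H) (hK : IsClosed (K : Set H)) (x : H) :
    projCLM K hK x ∈ K := by
  haveI := hK.completeSpace_coe
  exact (K.orthogonalProjectionOnto x).2

lemma projCLM_of_mem (K : Submodule ℂ H) (hK : IsClosed (K : Set H)) {x : H} (hx : x ∈ K) :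
    projCLM K hK x = x := by
  haveI := hK.completeSpace_coe
  exact K.starProjection_eq_self_iff.mpr hx

lemma projCLM_sub_mem (K : Submodule ℂ H) (hK : IsClosed (K : Set H)) (x : H) :
    x - projCLM K hK x ∈ Kᗮ := by
  haveI := hK.completeSpace_coe
  exact K.sub_starProjection_mem_orthogonal x

lemma projCLM_sa (K : Submodule ℂ H) (hK : IsClosed (K : Set H)) :
    IsSelfAdjoint (projCLM K hK) := by
  haveI := hK.completeSpace_coe
  exact isSelfAdjoint_starProjection K

lemma projCLM_pyth (K : Submodule ℂ H) (hK : IsClosed (K : Set H)) (x : H) :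
    ‖projCLM K hK x‖ ^ 2 + ‖x - projCLM K hK x‖ ^ 2 = ‖x‖ ^ 2 := by
  have h := norm_add_sq_eq_norm_sq_add_norm_sq_of_inner_eq_zero (projCLM K hK x)
    (x - projCLM K hK x)
    (Submodule.inner_right_of_mem_orthogonal (projCLM_mem K hK x) (projCLM_sub_mem K hK x))
  simpa [sq] using h.symm

lemma projCLM_norm_apply_le (K : Submodule ℂ H) (hK : IsClosed (K : Set H)) (x : H) :
    ‖projCLM K hK x‖ ≤ ‖x‖ := by
  nlinarith [projCLM_pyth K hK x, norm_nonneg (projCLM K hK x), norm_nonneg x,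
    norm_nonneg (x - projCLM K hK x)]

lemma sub_projCLM_norm_apply_le (K : Submodule ℂ H) (hK : IsClosed (K : Set H)) (x : H) :
    ‖x - projCLM K hK x‖ ≤ ‖x‖ := by
  nlinarith [projCLM_pyth K hK x, norm_nonneg (projCLM K hK x), norm_nonneg x,
    norm_nonneg (x - projCLM K hK x)]

lemma infDist_eq_projCLM (K : Submodule ℂ H) (hK : IsClosed (K : Set H)) (x : H) :
    Metric.infDist x (K : Set H) = ‖x - projCLM K hK x‖ := by
  haveI := hK.completeSpace_coe
  rw [Metric.infDist_eq_iInf]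
  have h : ‖x - projCLM K hK x‖ = ⨅ v : K, ‖x - v‖ := Submodule.starProjection_minimal x
  rw [h]
  exact iInf_congr fun y => dist_eq_norm _ _

end Helpers

section Main

variable {H : Type*} [NormedAddCommGroup H] [InnerProductSpace ℂ H] [CompleteSpace H]

lemma gapDelta_eq_norm (M N : Submodule ℂ H) (hM : IsClosed (M : Set H))
    (hN : IsClosed (N : Set H)) :
    gapDelta (M : Set H) (N : Set H) = ‖(1 - projCLM N hN) ∘L projCLM M hM‖ := by
  set P := projCLM M hM with hP
  set Q := projCLM N hN with hQ
  set S : Set ℝ := (fun x => Metric.infDist x (N : Set H)) '' {x | x ∈ (M : Set H) ∧ ‖x‖ = 1}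
    with hS
  have hTx : ∀ x : H, ((1 - Q) ∘L P) x = P x - Q (P x) := by intro x; simp
  by_cases hbot : ∀ x ∈ M, x = (0 : H)
  · have hSe : S = ∅ := by
      apply Set.eq_empty_iff_forall_notMem.mpr
      rintro d ⟨x, ⟨hxM, hx1⟩, rfl⟩
      have := hbot x hxM
      rw [this] at hx1; simp at hx1
    have hT0 : (1 - Q) ∘L P = 0 := by
      ext x
      have h0 : P x = 0 := hbot _ (projCLM_mem M hM x)
      simp [hTx, h0]
    rw [gapDelta, ← hS, hSe, hT0]
    simp [Real.sSup_empty]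
  · push_neg at hbot
    obtain ⟨m, hmM, hm0⟩ := hbot
    -- unit vector in M
    have hmem : ∀ x : H, x ∈ M → x ≠ 0 → ((‖x‖ : ℂ)⁻¹ • x ∈ M ∧ ‖(‖x‖ : ℂ)⁻¹ • x‖ = 1) := by
      intro x hx hx0
      refine ⟨M.smul_mem _ hx, ?_⟩
      have : ‖x‖ ≠ 0 := norm_ne_zero_iff.mpr hx0
      rw [norm_smul]
      simp [this]
    have hSne : S.Nonempty := by
      obtain ⟨h1, h2⟩ := hmem m hmM hm0
      exact ⟨_, ⟨_, ⟨h1, h2⟩, rfl⟩⟩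
    have hSub : ∀ d ∈ S, d ≤ ‖(1 - Q) ∘L P‖ := by
      rintro d ⟨x, ⟨hxM, hx1⟩, rfl⟩
      have hPx : P x = x := projCLM_of_mem M hM hxM
      have : Metric.infDist x (N : Set H) = ‖((1 - Q) ∘L P) x‖ := by
        rw [infDist_eq_projCLM N hN x, hTx, hPx]
      dsimp only
      rw [this]
      calc ‖((1 - Q) ∘L P) x‖ ≤ ‖(1 - Q) ∘L P‖ * ‖x‖ := le_opNorm _ _
        _ = ‖(1 - Q) ∘L P‖ := by rw [hx1, mul_one]
    have hbdd : BddAbove S := ⟨‖(1 - Q) ∘L P‖, fun d hd => hSub d hd⟩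
    have hSnonneg : (0 : ℝ) ≤ sSup S := by
      obtain ⟨d, hd⟩ := hSne
      refine le_trans ?_ (le_csSup hbdd hd)
      obtain ⟨x, _, rfl⟩ := hd
      exact Metric.infDist_nonneg
    refine le_antisymm (csSup_le hSne hSub) ?_
    refine opNorm_le_bound _ hSnonneg fun x => ?_
    by_cases hPx0 : P x = 0
    · rw [hTx, hPx0]
      simp only [map_zero, sub_zero, norm_zero]
      positivity
    · set u : H := (‖P x‖ : ℂ)⁻¹ • P x with hu
      obtain ⟨huM, hu1⟩ := hmem (P x) (projCLM_mem M hM x) hPx0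
      have hmemS : Metric.infDist u (N : Set H) ∈ S := ⟨u, ⟨huM, hu1⟩, rfl⟩
      have hPn : (0:ℝ) < ‖P x‖ := norm_pos_iff.mpr hPx0
      have hval : Metric.infDist u (N : Set H) = ‖P x‖⁻¹ * ‖((1 - Q) ∘L P) x‖ := by
        rw [infDist_eq_projCLM N hN u, hTx]
        have hPu : P u = u := projCLM_of_mem M hM huM
        have : u - Q u = (‖P x‖ : ℂ)⁻¹ • (P x - Q (P x)) := by
          rw [smul_sub, ← hu, ← map_smul, ← hu]
        rw [this, norm_smul]
        simp [hPn.ne']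
      have h1 : ‖P x‖⁻¹ * ‖((1 - Q) ∘L P) x‖ ≤ sSup S := hval ▸ le_csSup hbdd hmemS
      have h2 : ‖((1 - Q) ∘L P) x‖ ≤ sSup S * ‖P x‖ := by
        have h3 := mul_le_mul_of_nonneg_left h1 hPn.le
        rw [← mul_assoc, mul_inv_cancel₀ hPn.ne', one_mul] at h3
        rw [mul_comm]
        exact h3
      calc ‖((1 - Q) ∘L P) x‖ ≤ sSup S * ‖P x‖ := h2
        _ ≤ sSup S * ‖x‖ :=
          mul_le_mul_of_nonneg_left (projCLM_norm_apply_le M hM x) hSnonneg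

lemma norm_one_sub_projCLM_le (K : Submodule ℂ H) (hK : IsClosed (K : Set H)) :
    ‖1 - projCLM K hK‖ ≤ 1 := by
  refine opNorm_le_bound _ zero_le_one fun x => ?_
  rw [one_mul]
  simpa using sub_projCLM_norm_apply_le K hK x

lemma norm_projSub_eq_max (M N : Submodule ℂ H) (hM : IsClosed (M : Set H))
    (hN : IsClosed (N : Set H)) :
    ‖projCLM M hM - projCLM N hN‖ =
      max ‖(1 - projCLM N hN) ∘L projCLM M hM‖ ‖(1 - projCLM M hM) ∘L projCLM N hN‖ := by
  set P := projCLM M hM with hP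
  set Q := projCLM N hN with hQ
  set a := ‖(1 - Q) ∘L P‖ with ha
  set b := ‖(1 - P) ∘L Q‖ with hb
  have hanneg : 0 ≤ a := norm_nonneg _
  have hbnneg : 0 ≤ b := norm_nonneg _
  have hbQ : ‖Q ∘L (1 - P)‖ = b := by
    have hadj : adjoint (Q ∘L (1 - P)) = (1 - P) ∘L Q := by
      rw [adjoint_comp]
      congr 1
      · rw [map_sub, (projCLM_sa M hM).adjoint_eq]
        congr 1
        exact adjoint_id
      · exact (projCLM_sa N hN).adjoint_eq
    calc ‖Q ∘L (1 - P)‖ = ‖adjoint (Q ∘L (1 - P))‖ := (adjoint.norm_map _).symm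
      _ = b := by rw [hadj]
  refine le_antisymm ?_ (max_le ?_ ?_)
  · refine opNorm_le_bound _ (le_max_iff.mpr (Or.inl hanneg)) fun x => ?_
    set u : H := P x - Q (P x) with hu
    set v : H := Q (x - P x) with hv
    have hdecomp : (P - Q) x = u + (-v) := by
      simp only [hu, hv, sub_apply, map_sub]
      abel
    have horth : (inner ℂ u (-v) : ℂ) = 0 := by
      refine Submodule.inner_left_of_mem_orthogonal (K := N) ?_ ?_
      · exact N.neg_mem (projCLM_mem N hN _)
      · exact projCLM_sub_mem N hN (P x)
    have hsq : ‖(P - Q) x‖ ^ 2 = ‖u‖ ^ 2 + ‖v‖ ^ 2 := by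
      have h := norm_add_sq_eq_norm_sq_add_norm_sq_of_inner_eq_zero u (-v) horth
      rw [hdecomp]
      simpa [sq] using h
    have hPP : P (P x) = P x := projCLM_of_mem M hM (projCLM_mem M hM x)
    have hub : ‖u‖ ≤ a * ‖P x‖ := by
      have : u = ((1 - Q) ∘L P) (P x) := by simp [hu, hPP]
      rw [this]; exact le_opNorm _ _
    have hPsub : P (x - P x) = 0 := by
      rw [map_sub, hPP, sub_self]
    have hvb : ‖v‖ ≤ b * ‖x - P x‖ := by
      have : v = (Q ∘L (1 - P)) (x - P x) := by
        simp [hv, hPsub]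
      rw [this, ← hbQ]; exact le_opNorm _ _
    have hpyth : ‖P x‖ ^ 2 + ‖x - P x‖ ^ 2 = ‖x‖ ^ 2 := projCLM_pyth M hM x
    have hmax : ‖(P - Q) x‖ ^ 2 ≤ (max a b * ‖x‖) ^ 2 := by
      have hPxn : (0:ℝ) ≤ ‖P x‖ := norm_nonneg _
      have hsubn : (0:ℝ) ≤ ‖x - P x‖ := norm_nonneg _
      have hun : (0:ℝ) ≤ ‖u‖ := norm_nonneg _
      have hvn : (0:ℝ) ≤ ‖v‖ := norm_nonneg _
      have hub' : ‖u‖ ≤ max a b * ‖P x‖ :=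
        hub.trans (mul_le_mul_of_nonneg_right (le_max_left a b) hPxn)
      have hvb' : ‖v‖ ≤ max a b * ‖x - P x‖ :=
        hvb.trans (mul_le_mul_of_nonneg_right (le_max_right a b) hsubn)
      have e1 : ‖u‖ ^ 2 ≤ (max a b * ‖P x‖) ^ 2 := pow_le_pow_left₀ hun hub' 2
      have e2 : ‖v‖ ^ 2 ≤ (max a b * ‖x - P x‖) ^ 2 := pow_le_pow_left₀ hvn hvb' 2
      have e3 : (max a b * ‖x‖) ^ 2 =
          (max a b * ‖P x‖) ^ 2 + (max a b * ‖x - P x‖) ^ 2 := by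
        rw [mul_pow, mul_pow, mul_pow, ← hpyth]
        ring
      linarith [hsq, e1, e2, e3]
    exact le_of_pow_le_pow_left₀ two_ne_zero (by positivity) hmax
  · have hcomp : (1 - Q) ∘L P = (1 - Q) ∘L (P - Q) := by
      have hQQ : ∀ x : H, Q (Q x) = Q x := fun x =>
        projCLM_of_mem N hN (projCLM_mem N hN x)
      ext x
      simp [hQQ x]
    calc a = ‖(1 - Q) ∘L (P - Q)‖ := by rw [ha, hcomp]
      _ ≤ ‖1 - Q‖ * ‖P - Q‖ := opNorm_comp_le _ _
      _ ≤ 1 * ‖P - Q‖ := by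
          exact mul_le_mul_of_nonneg_right (norm_one_sub_projCLM_le N hN) (norm_nonneg _)
      _ = ‖P - Q‖ := one_mul _
  · have hcomp : (1 - P) ∘L Q = (1 - P) ∘L (Q - P) := by
      have hPP : ∀ x : H, P (P x) = P x := fun x =>
        projCLM_of_mem M hM (projCLM_mem M hM x)
      ext x
      simp [hPP x]
    calc b = ‖(1 - P) ∘L (Q - P)‖ := by rw [hb, hcomp]
      _ ≤ ‖1 - P‖ * ‖Q - P‖ := opNorm_comp_le _ _
      _ ≤ 1 * ‖Q - P‖ := by
          exact mul_le_mul_of_nonneg_right (norm_one_sub_projCLM_le M hM) (norm_nonneg _)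
      _ = ‖P - Q‖ := by rw [one_mul, norm_sub_rev]

end Main

variable {X Y : Type*} [NormedAddCommGroup X] [InnerProductSpace ℂ X] [CompleteSpace X]
  [NormedAddCommGroup Y] [InnerProductSpace ℂ Y] [CompleteSpace Y]
theorem stmt_1 {H : Type*} [NormedAddCommGroup H] [InnerProductSpace ℂ H] [CompleteSpace H]
    (M N : Submodule ℂ H) (hM : IsClosed (M : Set H)) (hN : IsClosed (N : Set H)) :
    gapHat (M : Set H) (N : Set H) = ‖projCLM M hM - projCLM N hN‖ := by
  rw [gapHat, gapDelta_eq_norm M N hM hN, gapDelta_eq_norm N M hN hM,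
    norm_projSub_eq_max M N hM hN]
end
end

section
/- Let X, Y be Hilbert spaces, A ∈ B(X,Y), and T ⊆ X, S ⊆ Y closed subspaces such that the outer inverse G = A_{T,S}^{(2)} exists. Then the operator P_{S^⊥} A P_T has closed range equal to S^⊥ and kernel equal to T^⊥. -/
noncomputable section

open ContinuousLinearMap

variable {X Y : Type*} [NormedAddCommGroup X] [InnerProductSpace ℂ X] [CompleteSpace X]
  [NormedAddCommGroup Y] [InnerProductSpace ℂ Y] [CompleteSpace Y]
theorem stmt_5 (A : X →L[ℂ] Y) (T : Submodule ℂ X) (S : Submodule ℂ Y)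
    (hT : IsClosed (T : Set X)) (hS : IsClosed (S : Set Y))
    (G : Y →L[ℂ] X) (hG : IsOuterInv A T S G) :
    IsClosed ((LinearMap.range ((projCLM Sᗮ (Submodule.isClosed_orthogonal S) ∘L
        (A ∘L projCLM T hT) : X →L[ℂ] Y) : X →ₗ[ℂ] Y) : Submodule ℂ Y) : Set Y) ∧
    LinearMap.range ((projCLM Sᗮ (Submodule.isClosed_orthogonal S) ∘L (A ∘L projCLM T hT) : X →L[ℂ] Y) : X →ₗ[ℂ] Y) = Sᗮ ∧
    LinearMap.ker ((projCLM Sᗮ (Submodule.isClosed_orthogonal S) ∘L (A ∘L projCLM T hT) : X →L[ℂ] Y) : X →ₗ[ℂ] Y) = Tᗮ := by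
  haveI : CompleteSpace S := hS.completeSpace_coe
  haveI : CompleteSpace T := hT.completeSpace_coe
  haveI : CompleteSpace Sᗮ := (Submodule.isClosed_orthogonal S).completeSpace_coe
  obtain ⟨h1, h2, h3⟩ := hG
  have h1' : ∀ y, G (A (G y)) = G y := fun y => congrArg (fun F => F y) h1
  have hPT : ∀ x, projCLM T hT x = (T.orthogonalProjectionOnto x : X) := fun _ => rfl
  have hPS : ∀ y, projCLM Sᗮ (Submodule.isClosed_orthogonal S) y
      = ((Sᗮ).orthogonalProjectionOnto y : Y) := fun _ => rfl
  -- kernel of PS : elements of S map to 0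
  have hPS_S : ∀ y ∈ S, projCLM Sᗮ (Submodule.isClosed_orthogonal S) y = 0 := by
    intro y hy
    rw [hPS]
    rw [Submodule.orthogonalProjectionOnto_eq_zero_iff.mpr (S.le_orthogonal_orthogonal hy)]
    rfl
  have hPS_id : ∀ y ∈ Sᗮ, projCLM Sᗮ (Submodule.isClosed_orthogonal S) y = y := by
    intro y hy
    rw [hPS]; exact (Sᗮ).starProjection_eq_self_iff.mpr hy
  have hPT_id : ∀ x ∈ T, projCLM T hT x = x := by
    intro x hx
    rw [hPT]; exact T.starProjection_eq_self_iff.mpr hx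
  -- range = Sᗮ
  have hrange : LinearMap.range ((projCLM Sᗮ (Submodule.isClosed_orthogonal S) ∘L
      (A ∘L projCLM T hT) : X →L[ℂ] Y) : X →ₗ[ℂ] Y) = Sᗮ := by
    apply le_antisymm
    · rintro y ⟨x, rfl⟩
      exact ((Sᗮ).orthogonalProjectionOnto (A (projCLM T hT x))).2
    · intro s hs
      refine ⟨G s, ?_⟩
      have hGsT : G s ∈ T := h2 ▸ LinearMap.mem_range_self (G : Y →ₗ[ℂ] X) s
      have hdiff : s - A (G s) ∈ S := by
        rw [← h3, LinearMap.mem_ker, ContinuousLinearMap.coe_coe, map_sub, h1' s, sub_self]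
      have : projCLM Sᗮ (Submodule.isClosed_orthogonal S) (s - A (G s)) = 0 := hPS_S _ hdiff
      have hsplit : projCLM Sᗮ (Submodule.isClosed_orthogonal S) (A (G s)) = s := by
        have := map_sub (projCLM Sᗮ (Submodule.isClosed_orthogonal S)) s (A (G s))
        rw [hPS_S _ hdiff] at this
        have h0 : projCLM Sᗮ (Submodule.isClosed_orthogonal S) s
            - projCLM Sᗮ (Submodule.isClosed_orthogonal S) (A (G s)) = 0 := this.symm
        have := sub_eq_zero.mp h0
        rw [← this, hPS_id s hs]
      simpa [ContinuousLinearMap.comp_apply, hPT_id _ hGsT] using hsplit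
  refine ⟨by rw [hrange]; exact Submodule.isClosed_orthogonal S, hrange, ?_⟩
  -- kernel = Tᗮ
  ext x
  simp only [LinearMap.mem_ker, ContinuousLinearMap.coe_coe, ContinuousLinearMap.comp_apply]
  constructor
  · intro hx
    have hmem : A (projCLM T hT x) ∈ Sᗮᗮ := by
      rw [hPS] at hx
      exact Submodule.orthogonalProjectionOnto_eq_zero_iff.mp (by exact_mod_cast Subtype.ext hx)
    rw [Submodule.orthogonal_orthogonal] at hmem
    have hker : G (A (projCLM T hT x)) = 0 := by
      rw [← ContinuousLinearMap.coe_coe G, ← LinearMap.mem_ker, h3]; exact hmem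
    have hPTT : projCLM T hT x ∈ T := (T.orthogonalProjectionOnto x).2
    obtain ⟨y, hy⟩ := (h2 ▸ hPTT : projCLM T hT x ∈ LinearMap.range (G : Y →ₗ[ℂ] X))
    have : projCLM T hT x = 0 := by
      rw [← hy] at hker ⊢
      rw [ContinuousLinearMap.coe_coe] at hker ⊢
      rw [h1' y] at hker
      exact hker
    rw [hPT] at this
    exact Submodule.orthogonalProjectionOnto_eq_zero_iff.mp (by exact_mod_cast Subtype.ext this)
  · intro hx
    have : projCLM T hT x = 0 := by
      rw [hPT, Submodule.orthogonalProjectionOnto_eq_zero_iff.mpr hx]; rfl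
    rw [this, map_zero, map_zero]
end
end

section
/- Let X, Y be Hilbert spaces, A ∈ B(X,Y), and T ⊆ X, S ⊆ Y closed subspaces such that G = A_{T,S}^{(2)} exists. If T' is a closed subspace of X with δ̂(T,T') < 1, then for every x' ∈ T' one has ‖G‖·‖Ax'‖ ≥ [1 − (1 + ‖A‖·‖G‖)·δ(T',T)]·‖x'‖. -/
noncomputable section

open ContinuousLinearMap

variable {X Y : Type*} [NormedAddCommGroup X] [InnerProductSpace ℂ X] [CompleteSpace X]
  [NormedAddCommGroup Y] [InnerProductSpace ℂ Y] [CompleteSpace Y]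
theorem stmt_6 (A : X →L[ℂ] Y) (T T' : Submodule ℂ X) (S : Submodule ℂ Y)
    (hT : IsClosed (T : Set X)) (hT' : IsClosed (T' : Set X)) (hS : IsClosed (S : Set Y))
    (G : Y →L[ℂ] X) (hG : IsOuterInv A T S G)
    (hgap : gapHat (T : Set X) (T' : Set X) < 1) :
    ∀ x' ∈ T',
      (1 - (1 + ‖A‖ * ‖G‖) * gapDelta (T' : Set X) (T : Set X)) * ‖x'‖ ≤ ‖G‖ * ‖A x'‖ := by
  obtain ⟨hGAG, hR, _⟩ := hG
  intro x' hx'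
  rcases eq_or_ne x' 0 with rfl | hx0
  · simp
  have hx'pos : 0 < ‖x'‖ := norm_pos_iff.mpr hx0
  set K := ‖A‖ * ‖G‖ with hK
  have hKnn : 0 ≤ K := mul_nonneg (norm_nonneg _) (norm_nonneg _)
  set δ := gapDelta (T' : Set X) (T : Set X) with hδ
  set u : X := (‖x'‖⁻¹ : ℂ) • x' with hu
  have hunorm : ‖u‖ = 1 := by
    rw [hu, norm_smul]
    simp [hx'pos.ne']
  have huT' : u ∈ T' := T'.smul_mem _ hx'
  have hδ1 : Metric.infDist u (T : Set X) ≤ δ := by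
    apply le_csSup
    · refine ⟨1, ?_⟩
      rintro r ⟨v, ⟨hv, hvn⟩, rfl⟩
      calc Metric.infDist v (T : Set X) ≤ dist v 0 := Metric.infDist_le_dist_of_mem T.zero_mem
        _ = 1 := by simp [hvn]
    · exact ⟨u, ⟨huT', hunorm⟩, rfl⟩
  have hδ0 : 0 ≤ δ := le_trans Metric.infDist_nonneg hδ1
  have key : ∀ ε > 0, (1 - (1 + K) * δ) * ‖x'‖ ≤ ‖G‖ * ‖A x'‖ + (1 + K) * ‖x'‖ * ε := by
    intro ε hε
    have hT0 : (T : Set X).Nonempty := ⟨0, T.zero_mem⟩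
    have hlt : Metric.infDist u (T : Set X) < δ + ε := lt_of_le_of_lt hδ1 (by linarith)
    obtain ⟨y, hyT, hy⟩ := (Metric.infDist_lt_iff hT0).mp hlt
    set x : X := (‖x'‖ : ℂ) • y with hx
    have hxT : x ∈ T := T.smul_mem _ hyT
    have hc : ‖x' - x‖ ≤ ‖x'‖ * (δ + ε) := by
      have hxx : x' - x = (‖x'‖ : ℂ) • (u - y) := by
        rw [smul_sub, hu, smul_smul]
        have : ((‖x'‖ : ℂ) * (‖x'‖⁻¹ : ℂ)) = 1 := by
          rw [← Complex.ofReal_inv, ← Complex.ofReal_mul, mul_inv_cancel₀ hx'pos.ne']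
          simp
        rw [this, one_smul]
      rw [hxx, norm_smul]
      have h1 : ‖(‖x'‖ : ℂ)‖ = ‖x'‖ := by simp [abs_of_nonneg (norm_nonneg x')]
      rw [h1]
      have h2 : ‖u - y‖ ≤ δ + ε := le_of_lt (by simpa [dist_eq_norm] using hy)
      exact mul_le_mul_of_nonneg_left h2 (norm_nonneg _)
    have hxG : ‖x‖ ≤ ‖G‖ * ‖A x‖ := by
      have : x ∈ LinearMap.range (G : Y →ₗ[ℂ] X) := hR ▸ hxT
      obtain ⟨w, hw⟩ := this
      have hfix : G (A x) = x := by
        rw [← hw]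
        have := congrArg (fun f => f w) hGAG
        simpa using this
      calc ‖x‖ = ‖G (A x)‖ := by rw [hfix]
        _ ≤ ‖G‖ * ‖A x‖ := G.le_opNorm _
    have hAx : ‖A x‖ ≤ ‖A x'‖ + ‖A‖ * (‖x'‖ * (δ + ε)) := by
      have h1 : A x = A x' + A (x - x') := by rw [← map_add]; congr 1; abel
      calc ‖A x‖ = ‖A x' + A (x - x')‖ := by rw [h1]
        _ ≤ ‖A x'‖ + ‖A (x - x')‖ := norm_add_le _ _
        _ ≤ ‖A x'‖ + ‖A‖ * ‖x - x'‖ := by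
            exact add_le_add_right (A.le_opNorm _) _
        _ ≤ ‖A x'‖ + ‖A‖ * (‖x'‖ * (δ + ε)) := by
            have := hc
            rw [norm_sub_rev] at this
            exact add_le_add_right (mul_le_mul_of_nonneg_left this (norm_nonneg A)) _
    have htri : ‖x'‖ ≤ ‖x‖ + ‖x' - x‖ := by
      have := norm_sub_norm_le x' x
      linarith
    have h5 : ‖x'‖ ≤ ‖G‖ * ‖A x'‖ + K * (‖x'‖ * (δ + ε)) + ‖x'‖ * (δ + ε) := by
      calc ‖x'‖ ≤ ‖x‖ + ‖x' - x‖ := htri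
        _ ≤ ‖G‖ * ‖A x‖ + ‖x'‖ * (δ + ε) := add_le_add hxG hc
        _ ≤ ‖G‖ * (‖A x'‖ + ‖A‖ * (‖x'‖ * (δ + ε))) + ‖x'‖ * (δ + ε) :=
            add_le_add_left (mul_le_mul_of_nonneg_left hAx (norm_nonneg G)) _
        _ = ‖G‖ * ‖A x'‖ + K * (‖x'‖ * (δ + ε)) + ‖x'‖ * (δ + ε) := by rw [hK]; ring
    nlinarith [h5]
  apply le_of_forall_pos_le_add
  intro η hη
  have hden : 0 < (1 + K) * ‖x'‖ := mul_pos (by linarith) hx'pos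
  have hε : 0 < η / ((1 + K) * ‖x'‖) := div_pos hη hden
  have := key _ hε
  calc (1 - (1 + K) * δ) * ‖x'‖ ≤ ‖G‖ * ‖A x'‖ + (1 + K) * ‖x'‖ * (η / ((1 + K) * ‖x'‖)) := this
    _ = ‖G‖ * ‖A x'‖ + η := by field_simp
end
end

section
/- Let X, Y be Hilbert spaces, A ∈ B(X,Y), and T ⊆ X, S ⊆ Y closed subspaces such that G = A_{T,S}^{(2)} exists. If T' is a closed subspace of X with δ̂(T,T') < 1/(1 + ‖A‖·‖G‖), then δ̂(AT, AT') ≤ ‖A‖·‖G‖·δ̂(T,T') / (1 − (1 + ‖A‖·‖G‖)·δ̂(T,T')). -/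
noncomputable section

open ContinuousLinearMap

variable {X Y : Type*} [NormedAddCommGroup X] [InnerProductSpace ℂ X] [CompleteSpace X]
  [NormedAddCommGroup Y] [InnerProductSpace ℂ Y] [CompleteSpace Y]
lemma gapDelta_nonneg' {H : Type*} [NormedAddCommGroup H] (M N : Set H) :
    0 ≤ gapDelta M N :=
  Real.sSup_nonneg (by rintro _ ⟨x, _, rfl⟩; exact Metric.infDist_nonneg)

lemma gapDelta_bddAbove' {H : Type*} [NormedAddCommGroup H] (M N : Set H) (h0 : (0:H) ∈ N) :
    BddAbove ((fun x => Metric.infDist x N) '' {x | x ∈ M ∧ ‖x‖ = 1}) := by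
  refine ⟨1, ?_⟩
  rintro _ ⟨x, ⟨_, hx⟩, rfl⟩
  calc Metric.infDist x N ≤ dist x 0 := Metric.infDist_le_dist_of_mem h0
  _ = 1 := by simp [dist_eq_norm, hx]

lemma gapDelta_le' {H : Type*} [NormedAddCommGroup H] {M N : Set H} {c : ℝ}
    (hc : 0 ≤ c) (h : ∀ x ∈ M, ‖x‖ = 1 → Metric.infDist x N ≤ c) : gapDelta M N ≤ c :=
  Real.sSup_le (by rintro _ ⟨x, ⟨hxM, hx1⟩, rfl⟩; exact h x hxM hx1) hc

lemma infDist_le_norm_mul_gapDelta' {H : Type*} [NormedAddCommGroup H] [NormedSpace ℂ H]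
    (M N : Submodule ℂ H) {x : H} (hx : x ∈ M) :
    Metric.infDist x (N : Set H) ≤ ‖x‖ * gapDelta (M : Set H) (N : Set H) := by
  rcases eq_or_ne x 0 with rfl | hx0
  · simp [Metric.infDist_zero_of_mem N.zero_mem]
  · have hxpos : (0:ℝ) < ‖x‖ := norm_pos_iff.mpr hx0
    set u : H := ((‖x‖:ℂ))⁻¹ • x with hu
    have hnu : ‖u‖ = 1 := by
      rw [hu, norm_smul]
      simp [hxpos.ne']
    have huM : u ∈ M := M.smul_mem _ hx
    have h1 : Metric.infDist u (N : Set H) ≤ gapDelta (M : Set H) (N : Set H) :=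
      le_csSup (gapDelta_bddAbove' _ _ N.zero_mem) ⟨u, ⟨huM, hnu⟩, rfl⟩
    refine le_of_forall_pos_le_add fun ε hε => ?_
    have hlt : Metric.infDist u (N : Set H) < Metric.infDist u (N : Set H) + ε / ‖x‖ := by
      have : 0 < ε / ‖x‖ := div_pos hε hxpos
      linarith
    obtain ⟨n, hnN, hdn⟩ := (Metric.infDist_lt_iff ⟨0, N.zero_mem⟩).mp hlt
    have hxu : x = ((‖x‖:ℂ)) • u := by
      rw [hu, smul_smul]
      rw [mul_inv_cancel₀ (by exact_mod_cast hxpos.ne')]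
      simp
    have hmem : ((‖x‖:ℂ)) • n ∈ (N : Set H) := N.smul_mem _ hnN
    have key : dist x (((‖x‖:ℂ)) • n) = ‖x‖ * dist u n := by
      rw [dist_eq_norm, dist_eq_norm]
      calc ‖x - (‖x‖:ℂ) • n‖ = ‖(‖x‖:ℂ) • (u - n)‖ := by rw [smul_sub, ← hxu]
      _ = ‖x‖ * ‖u - n‖ := by rw [norm_smul]; simp
    calc Metric.infDist x (N : Set H) ≤ dist x (((‖x‖:ℂ)) • n) := Metric.infDist_le_dist_of_mem hmem
    _ = ‖x‖ * dist u n := key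
    _ ≤ ‖x‖ * (Metric.infDist u (N : Set H) + ε / ‖x‖) := by
        exact mul_le_mul_of_nonneg_left hdn.le hxpos.le
    _ = ‖x‖ * Metric.infDist u (N : Set H) + ε := by
        field_simp
    _ ≤ ‖x‖ * gapDelta (M : Set H) (N : Set H) + ε := by nlinarith

set_option maxHeartbeats 1000000
theorem stmt_7 (A : X →L[ℂ] Y) (T T' : Submodule ℂ X) (S : Submodule ℂ Y)
    (hT : IsClosed (T : Set X)) (hT' : IsClosed (T' : Set X)) (hS : IsClosed (S : Set Y))
    (G : Y →L[ℂ] X) (hG : IsOuterInv A T S G)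
    (hgap : gapHat (T : Set X) (T' : Set X) < 1 / (1 + ‖A‖ * ‖G‖)) :
    gapHat (A '' (T : Set X)) (A '' (T' : Set X)) ≤
      ‖A‖ * ‖G‖ * gapHat (T : Set X) (T' : Set X) /
        (1 - (1 + ‖A‖ * ‖G‖) * gapHat (T : Set X) (T' : Set X)) := by
  obtain ⟨hGAG, hR, _⟩ := hG
  set a : ℝ := ‖A‖ with ha
  set g : ℝ := ‖G‖ with hg
  set δ : ℝ := gapHat (T : Set X) (T' : Set X) with hδdef
  have ha0 : 0 ≤ a := norm_nonneg _
  have hg0 : 0 ≤ g := norm_nonneg _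
  have hδ0 : 0 ≤ δ := le_trans (gapDelta_nonneg' _ _) (le_max_left _ _)
  have hag : (0:ℝ) < 1 + a * g := by positivity
  have hd : 0 < 1 - (1 + a * g) * δ := by
    have h1 : δ * (1 + a * g) < 1 := (lt_div_iff₀ hag).mp hgap
    nlinarith
  have hd1 : 1 - (1 + a * g) * δ ≤ 1 := by nlinarith
  -- G A x = x for x ∈ T
  have hGA : ∀ x ∈ T, G (A x) = x := by
    intro x hx
    rw [← hR] at hx
    obtain ⟨y, rfl⟩ := hx
    have := DFunLike.congr_fun hGAG y
    simpa using this
  have hnormGA : ∀ x ∈ T, ‖x‖ ≤ g * ‖A x‖ := by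
    intro x hx
    calc ‖x‖ = ‖G (A x)‖ := by rw [hGA x hx]
    _ ≤ g * ‖A x‖ := G.le_opNorm _
  have hδTT' : gapDelta (T : Set X) (T' : Set X) ≤ δ := le_max_left _ _
  have hδT'T : gapDelta (T' : Set X) (T : Set X) ≤ δ := le_max_right _ _
  have hne : (T : Set X).Nonempty := ⟨0, T.zero_mem⟩
  have hne' : (T' : Set X).Nonempty := ⟨0, T'.zero_mem⟩
  set R : ℝ := a * g * δ / (1 - (1 + a * g) * δ) with hRdef
  have hR0 : 0 ≤ R := by
    apply div_nonneg _ hd.le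
    positivity
  -- Direction 1: gapDelta (A''T) (A''T') ≤ a*g*δ ≤ R
  have hD1 : gapDelta (A '' (T : Set X)) (A '' (T' : Set X)) ≤ a * g * δ := by
    apply gapDelta_le' (by positivity)
    rintro _ ⟨x, hxT, rfl⟩ hy1
    have hxg : ‖x‖ ≤ g := by
      calc ‖x‖ ≤ g * ‖A x‖ := hnormGA x hxT
      _ = g := by rw [hy1, mul_one]
    have hid : Metric.infDist x (T' : Set X) ≤ g * δ := by
      calc Metric.infDist x (T' : Set X) ≤ ‖x‖ * gapDelta (T : Set X) (T' : Set X) :=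
        infDist_le_norm_mul_gapDelta' T T' hxT
      _ ≤ g * δ := by
          apply mul_le_mul hxg hδTT' (gapDelta_nonneg' _ _) hg0
    refine le_of_forall_pos_le_add fun ε hε => ?_
    have hε' : 0 < ε / (a + 1) := by positivity
    have hlt : Metric.infDist x (T' : Set X) < g * δ + ε / (a + 1) := by linarith
    obtain ⟨x', hx'T', hdx⟩ := (Metric.infDist_lt_iff hne').mp hlt
    calc Metric.infDist (A x) (A '' (T' : Set X)) ≤ dist (A x) (A x') :=
      Metric.infDist_le_dist_of_mem ⟨x', hx'T', rfl⟩
    _ = ‖A (x - x')‖ := by rw [dist_eq_norm, ← map_sub]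
    _ ≤ a * ‖x - x'‖ := A.le_opNorm _
    _ ≤ a * (g * δ + ε / (a + 1)) := by
        apply mul_le_mul_of_nonneg_left _ ha0
        rw [← dist_eq_norm]; exact hdx.le
    _ ≤ a * g * δ + ε := by
        have : a * (ε / (a + 1)) ≤ ε := by
          rw [div_eq_inv_mul, ← mul_assoc]
          have h1 : a * (a + 1)⁻¹ ≤ 1 := by
            rw [mul_inv_le_iff₀ (by positivity)]
            linarith
          nlinarith
        nlinarith
  -- Direction 2
  have hD2 : gapDelta (A '' (T' : Set X)) (A '' (T : Set X)) ≤ R := by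
    apply gapDelta_le' hR0
    rintro _ ⟨x', hx'T', rfl⟩ hy1
    -- bound ‖x'‖ ≤ g / d
    have hxdist : Metric.infDist x' (T : Set X) ≤ ‖x'‖ * δ := by
      calc Metric.infDist x' (T : Set X) ≤ ‖x'‖ * gapDelta (T' : Set X) (T : Set X) :=
        infDist_le_norm_mul_gapDelta' T' T hx'T'
      _ ≤ ‖x'‖ * δ := mul_le_mul_of_nonneg_left hδT'T (norm_nonneg _)
    have hx'bound : ‖x'‖ * (1 - (1 + a * g) * δ) ≤ g := by
      refine le_of_forall_pos_le_add fun ε hε => ?_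
      have hε' : 0 < ε / (1 + a * g) := by positivity
      have hlt : Metric.infDist x' (T : Set X) < ‖x'‖ * δ + ε / (1 + a * g) := by linarith
      obtain ⟨x, hxT, hdx⟩ := (Metric.infDist_lt_iff hne).mp hlt
      have hdx' : ‖x' - x‖ ≤ ‖x'‖ * δ + ε / (1 + a * g) := by
        rw [← dist_eq_norm]; exact hdx.le
      have h2 : ‖x‖ ≤ g * (1 + a * ‖x' - x‖) := by
        calc ‖x‖ ≤ g * ‖A x‖ := hnormGA x hxT
        _ ≤ g * (‖A x'‖ + ‖A (x - x')‖) := by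
            apply mul_le_mul_of_nonneg_left _ hg0
            calc ‖A x‖ = ‖A x' + A (x - x')‖ := by rw [← map_add, show x' + (x - x') = x from by abel]
            _ ≤ ‖A x'‖ + ‖A (x - x')‖ := norm_add_le _ _
        _ ≤ g * (1 + a * ‖x' - x‖) := by
            apply mul_le_mul_of_nonneg_left _ hg0
            have h3 : ‖A (x - x')‖ ≤ a * ‖x - x'‖ := A.le_opNorm _
            rw [hy1] at *
            rw [norm_sub_rev x x'] at h3
            linarith [hy1]
      have h4 : ‖x'‖ ≤ ‖x‖ + ‖x' - x‖ := by
        calc ‖x'‖ = ‖x + (x' - x)‖ := by congr 1; abel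
        _ ≤ ‖x‖ + ‖x' - x‖ := norm_add_le _ _
      have hεeq : (1 + a * g) * (ε / (1 + a * g)) = ε := by field_simp
      nlinarith [mul_le_mul_of_nonneg_left hdx' (mul_nonneg ha0 hg0)]
    have hx'le : ‖x'‖ ≤ g / (1 - (1 + a * g) * δ) := (le_div_iff₀ hd).mpr hx'bound
    -- now the distance estimate
    refine le_of_forall_pos_le_add fun ε hε => ?_
    have hε' : 0 < ε / (a + 1) := by positivity
    have hlt : Metric.infDist x' (T : Set X) < ‖x'‖ * δ + ε / (a + 1) := by linarith
    obtain ⟨x, hxT, hdx⟩ := (Metric.infDist_lt_iff hne).mp hlt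
    calc Metric.infDist (A x') (A '' (T : Set X)) ≤ dist (A x') (A x) :=
      Metric.infDist_le_dist_of_mem ⟨x, hxT, rfl⟩
    _ = ‖A (x' - x)‖ := by rw [dist_eq_norm, ← map_sub]
    _ ≤ a * ‖x' - x‖ := A.le_opNorm _
    _ ≤ a * (‖x'‖ * δ + ε / (a + 1)) := by
        apply mul_le_mul_of_nonneg_left _ ha0
        rw [← dist_eq_norm]; exact hdx.le
    _ ≤ R + ε := by
        have h5 : a * (‖x'‖ * δ) ≤ R := by
          show a * (‖x'‖ * δ) ≤ a * g * δ / (1 - (1 + a * g) * δ)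
          calc a * (‖x'‖ * δ) ≤ a * ((g / (1 - (1 + a * g) * δ)) * δ) :=
            mul_le_mul_of_nonneg_left (mul_le_mul_of_nonneg_right hx'le hδ0) ha0
          _ = a * g * δ / (1 - (1 + a * g) * δ) := by field_simp
        have h6 : a * (ε / (a + 1)) ≤ ε := by
          rw [div_eq_inv_mul, ← mul_assoc]
          have h1 : a * (a + 1)⁻¹ ≤ 1 := by
            rw [mul_inv_le_iff₀ (by positivity)]
            linarith
          nlinarith
        nlinarith
  -- combine
  have hD1' : a * g * δ ≤ R := by
    show a * g * δ ≤ a * g * δ / (1 - (1 + a * g) * δ)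
    rw [le_div_iff₀ hd]
    nlinarith [mul_le_mul_of_nonneg_left hd1 (mul_nonneg (mul_nonneg ha0 hg0) hδ0)]
  exact max_le (hD1.trans hD1') hD2
end
end

section
/- Let H be a Hilbert space, M a closed subspace of H, and P ∈ B(H) an idempotent operator with range M. If M' is a closed subspace of H with δ̂(M,M') < 1/(1 + ‖P‖), then H = R(I−P) ⊕ M' (topological direct sum), i.e., M' is a complement of the kernel-range R(I−P) of P. -/
noncomputable section

open ContinuousLinearMap

variable {X Y : Type*} [NormedAddCommGroup X] [InnerProductSpace ℂ X] [CompleteSpace X]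
  [NormedAddCommGroup Y] [InnerProductSpace ℂ Y] [CompleteSpace Y]
set_option linter.unusedSectionVars false
set_option linter.deprecated false
set_option linter.unnecessarySimpa false
set_option maxHeartbeats 800000

namespace GapAux

variable {H : Type*} [NormedAddCommGroup H] [InnerProductSpace ℂ H]

lemma le_infDist' {s : Set H} (hs : s.Nonempty) {x : H} {b : ℝ}
    (h : ∀ y ∈ s, b ≤ dist x y) : b ≤ Metric.infDist x s := by
  by_contra hb
  push_neg at hb
  obtain ⟨y, hy, hlt⟩ := (Metric.infDist_lt_iff hs).mp hb
  exact absurd (h y hy) (not_le.mpr hlt)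

lemma infDist_mul_bound {s : Set H} (hs : s.Nonempty) {x : H} {a b : ℝ} (ha : 0 < a)
    (h : ∀ y ∈ s, b ≤ a * dist x y) : b ≤ a * Metric.infDist x s := by
  rw [← div_le_iff₀' ha]
  apply le_infDist' hs
  intro y hy
  rw [div_le_iff₀' ha]
  exact h y hy

lemma infDist_smul_le (B : Submodule ℂ H) (c : ℝ) (x : H) :
    Metric.infDist (c • x) (B : Set H) ≤ |c| * Metric.infDist x (B : Set H) := by
  rcases eq_or_ne c 0 with rfl | hc
  · simp [Metric.infDist_zero_of_mem B.zero_mem]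
  · have ha : (0:ℝ) < |c| := abs_pos.mpr hc
    rw [← div_le_iff₀' ha]
    apply le_infDist' ⟨0, B.zero_mem⟩
    intro y hy
    rw [div_le_iff₀' ha]
    have hcy : c • y ∈ (B : Set H) := B.smul_of_tower_mem c hy
    calc Metric.infDist (c • x) (B : Set H) ≤ dist (c • x) (c • y) :=
          Metric.infDist_le_dist_of_mem hcy
      _ = |c| * dist x y := by rw [dist_smul₀]; simp

lemma gapDelta_nonneg (A B : Set H) : 0 ≤ gapDelta A B := by
  apply Real.sSup_nonneg
  rintro r ⟨y, -, rfl⟩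
  exact Metric.infDist_nonneg

lemma infDist_le_gapDelta (A B : Submodule ℂ H) {x : H} (hx : x ∈ A) :
    Metric.infDist x (B : Set H) ≤ gapDelta (A : Set H) (B : Set H) * ‖x‖ := by
  rcases eq_or_ne x 0 with rfl | hx0
  · simp [Metric.infDist_zero_of_mem B.zero_mem]
  · have hxn : (0:ℝ) < ‖x‖ := norm_pos_iff.mpr hx0
    set u := (‖x‖⁻¹ : ℝ) • x with hu_def
    have hu : ‖u‖ = 1 := by
      rw [hu_def, norm_smul]
      simp [abs_of_nonneg (inv_nonneg.mpr hxn.le), inv_mul_cancel₀ hxn.ne']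
    have huA : u ∈ A := A.smul_of_tower_mem _ hx
    have hbdd : BddAbove ((fun y => Metric.infDist y (B : Set H)) ''
        {y | y ∈ (A : Set H) ∧ ‖y‖ = 1}) := by
      refine ⟨1, ?_⟩
      rintro r ⟨y, ⟨-, hy1⟩, rfl⟩
      calc Metric.infDist y (B : Set H) ≤ dist y 0 :=
            Metric.infDist_le_dist_of_mem B.zero_mem
        _ = 1 := by simp [hy1]
    have hle : Metric.infDist u (B : Set H) ≤ gapDelta (A : Set H) (B : Set H) :=
      le_csSup hbdd ⟨u, ⟨huA, hu⟩, rfl⟩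
    have hxu : x = (‖x‖ : ℝ) • u := by
      rw [hu_def, smul_smul, mul_inv_cancel₀ hxn.ne', one_smul]
    calc Metric.infDist x (B : Set H) = Metric.infDist ((‖x‖ : ℝ) • u) (B : Set H) := by
          rw [← hxu]
      _ ≤ |‖x‖| * Metric.infDist u (B : Set H) := infDist_smul_le B _ u
      _ = ‖x‖ * Metric.infDist u (B : Set H) := by rw [abs_of_nonneg (norm_nonneg x)]
      _ ≤ ‖x‖ * gapDelta (A : Set H) (B : Set H) :=
          mul_le_mul_of_nonneg_left hle (norm_nonneg x)
      _ = gapDelta (A : Set H) (B : Set H) * ‖x‖ := mul_comm _ _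

end GapAux

open GapAux

theorem stmt_8 {H : Type*} [NormedAddCommGroup H] [InnerProductSpace ℂ H] [CompleteSpace H]
    (M M' : Submodule ℂ H) (hM : IsClosed (M : Set H)) (hM' : IsClosed (M' : Set H))
    (P : H →L[ℂ] H) (hP : P ∘L P = P) (hPr : LinearMap.range (P : H →ₗ[ℂ] H) = M)
    (hgap : gapHat (M : Set H) (M' : Set H) < 1 / (1 + ‖P‖)) :
    IsCompl (LinearMap.range (((1 : H →L[ℂ] H) - P : H →L[ℂ] H) : H →ₗ[ℂ] H)) M' := by
  set δ := gapHat (M : Set H) (M' : Set H) with hδ_def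
  have hc : (0:ℝ) < 1 + ‖P‖ := by positivity
  have hδ0 : 0 ≤ δ := le_trans (gapDelta_nonneg _ _) (le_max_left _ _)
  have hδ1 : (1 + ‖P‖) * δ < 1 := by
    rw [lt_div_iff₀ hc] at hgap
    linarith [hgap]
  -- P fixes M
  have hPP : ∀ x, P (P x) = P x := fun x => by
    have := ContinuousLinearMap.ext_iff.mp hP x
    simpa using this
  have hPm : ∀ m ∈ M, P m = m := by
    intro m hm
    rw [← hPr] at hm
    obtain ⟨z, rfl⟩ := hm
    exact hPP z
  -- range (1 - P) = ker P
  have hker : LinearMap.range (((1 : H →L[ℂ] H) - P : H →L[ℂ] H) : H →ₗ[ℂ] H) = LinearMap.ker (P : H →ₗ[ℂ] H) := by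
    apply le_antisymm
    · rintro _ ⟨x, rfl⟩
      have : ((1 : H →L[ℂ] H) - P) x = x - P x := by
        simp [ContinuousLinearMap.sub_apply]
      rw [LinearMap.mem_ker, ContinuousLinearMap.coe_coe, ContinuousLinearMap.coe_coe, this, map_sub, hPP]
      simp
    · intro x hx
      rw [LinearMap.mem_ker] at hx
      exact ⟨x, by simp [ContinuousLinearMap.sub_apply, hx]⟩
  -- key estimate on M'
  have hest : ∀ y ∈ M', ‖y - P y‖ ≤ (1 + ‖P‖) * δ * ‖y‖ := by
    intro y hy
    have step : ∀ m ∈ (M : Set H), ‖y - P y‖ ≤ (1 + ‖P‖) * dist y m := by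
      intro m hm
      have h1 : y - P y = (y - m) - P (y - m) := by
        rw [map_sub, hPm m hm]; abel
      calc ‖y - P y‖ = ‖(y - m) - P (y - m)‖ := by rw [h1]
        _ ≤ ‖y - m‖ + ‖P (y - m)‖ := norm_sub_le _ _
        _ ≤ ‖y - m‖ + ‖P‖ * ‖y - m‖ := by linarith [P.le_opNorm (y - m)]
        _ = (1 + ‖P‖) * ‖y - m‖ := by ring
        _ = (1 + ‖P‖) * dist y m := by rw [dist_eq_norm]
    have h2 : ‖y - P y‖ ≤ (1 + ‖P‖) * Metric.infDist y (M : Set H) :=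
      infDist_mul_bound ⟨0, M.zero_mem⟩ hc step
    have h3 : Metric.infDist y (M : Set H) ≤ gapDelta (M' : Set H) (M : Set H) * ‖y‖ :=
      infDist_le_gapDelta M' M hy
    have h4 : gapDelta (M' : Set H) (M : Set H) ≤ δ := le_max_right _ _
    have h5 : gapDelta (M' : Set H) (M : Set H) * ‖y‖ ≤ δ * ‖y‖ :=
      mul_le_mul_of_nonneg_right h4 (norm_nonneg y)
    calc ‖y - P y‖ ≤ (1 + ‖P‖) * Metric.infDist y (M : Set H) := h2
      _ ≤ (1 + ‖P‖) * (δ * ‖y‖) := mul_le_mul_of_nonneg_left (le_trans h3 h5) hc.le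
      _ = (1 + ‖P‖) * δ * ‖y‖ := by ring
  set ε := 1 - (1 + ‖P‖) * δ with hε_def
  have hε : 0 < ε := by simp only [hε_def]; linarith
  have hlb : ∀ y ∈ M', ε * ‖y‖ ≤ ‖P y‖ := by
    intro y hy
    have h1 : ‖y‖ ≤ ‖y - P y‖ + ‖P y‖ := by
      calc ‖y‖ = ‖(y - P y) + P y‖ := by congr 1; abel
        _ ≤ ‖y - P y‖ + ‖P y‖ := norm_add_le _ _
    have h2 := hest y hy
    simp only [hε_def]
    nlinarith [norm_nonneg y]
  -- M' is complete
  haveI : CompleteSpace M' := hM'.completeSpace_coe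
  -- g = P restricted to M'
  set g : M' →L[ℂ] H := P.comp M'.subtypeL with hg_def
  have hanti : AntilipschitzWith (ε⁻¹).toNNReal g := by
    apply g.antilipschitz_of_bound
    intro y
    have h1 : ε * ‖(y : H)‖ ≤ ‖P (y : H)‖ := hlb y y.2
    have h2 : ‖(y : H)‖ ≤ ε⁻¹ * ‖P (y : H)‖ := by
      rw [inv_mul_eq_div, le_div_iff₀' hε]
      exact h1
    have h3 : ‖g y‖ = ‖P (y : H)‖ := rfl
    rw [Real.coe_toNNReal _ (inv_nonneg.mpr hε.le), h3]
    exact h2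
  have hWclosed0 : IsClosed ((LinearMap.range (g : M' →ₗ[ℂ] H) : Submodule ℂ H) : Set H) := by
    rw [LinearMap.coe_range]
    exact hanti.isClosed_range g.uniformContinuous
  set W : Submodule ℂ H := Submodule.map (P : H →ₗ[ℂ] H) M' with hW_def
  have hWeq : (LinearMap.range (g : M' →ₗ[ℂ] H) : Submodule ℂ H) = W := by
    ext x
    simp only [LinearMap.mem_range, hW_def, Submodule.mem_map]
    constructor
    · rintro ⟨y, rfl⟩
      exact ⟨(y : H), y.2, rfl⟩
    · rintro ⟨y, hy, rfl⟩
      exact ⟨⟨y, hy⟩, rfl⟩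
  have hWclosed : IsClosed (W : Set H) := hWeq ▸ hWclosed0
  have hWM : W ≤ M := by
    rintro _ ⟨y, hy, rfl⟩
    rw [← hPr]
    exact ⟨y, rfl⟩
  -- M ≤ W
  have hMW : M ≤ W := by
    rcases eq_or_lt_of_le (norm_nonneg P) with hP0 | hP0
    · -- P = 0, M = ⊥
      have : P = 0 := by rw [← norm_eq_zero, ← hP0]
      intro m hm
      rw [← hPr, this] at hm
      obtain ⟨z, rfl⟩ := hm
      simpa using W.zero_mem
    · intro m hm
      haveI : CompleteSpace W := hWclosed.completeSpace_coe
      obtain ⟨w, hwW, hzperp'⟩ : ∃ w, w ∈ W ∧ m - w ∈ Wᗮ :=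
        ⟨W.starProjection m, by rw [Submodule.starProjection_apply]; exact Submodule.coe_mem _,
            W.sub_starProjection_mem_orthogonal m⟩
      set z : H := m - w with hz_def
      have hzperp : z ∈ Wᗮ := hzperp'
      have hzM : z ∈ M := M.sub_mem hm (hWM hwW)
      -- ‖z‖ ≤ infDist z W
      have hnorm_le : ‖z‖ ≤ Metric.infDist z (W : Set H) := by
        apply le_infDist' ⟨0, W.zero_mem⟩
        intro w' hw'
        have horth : inner (𝕜 := ℂ) z w' = 0 := by
          have := (Submodule.mem_orthogonal W z).mp hzperp w' hw'
          rw [← inner_conj_symm, this, map_zero]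
        have horth' : inner (𝕜 := ℂ) z (-w') = 0 := by
          rw [inner_neg_right, horth, neg_zero]
        have hsq : ‖z - w'‖ * ‖z - w'‖ = ‖z‖ * ‖z‖ + ‖-w'‖ * ‖-w'‖ := by
          rw [sub_eq_add_neg]
          exact norm_add_sq_eq_norm_sq_add_norm_sq_of_inner_eq_zero _ _ horth'
        rw [dist_eq_norm]
        nlinarith [norm_nonneg z, norm_nonneg w', norm_nonneg (z - w'), norm_nonneg (-w')]
      -- infDist z W ≤ ‖P‖ * δ * ‖z‖
      have hstep : ∀ y ∈ (M' : Set H), Metric.infDist z (W : Set H) ≤ ‖P‖ * dist z y := by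
        intro y hy
        have hPyW : P y ∈ W := ⟨y, hy, rfl⟩
        calc Metric.infDist z (W : Set H) ≤ dist z (P y) := Metric.infDist_le_dist_of_mem hPyW
          _ = ‖z - P y‖ := dist_eq_norm _ _
          _ = ‖P (z - y)‖ := by rw [map_sub, hPm z hzM]
          _ ≤ ‖P‖ * ‖z - y‖ := P.le_opNorm _
          _ = ‖P‖ * dist z y := by rw [dist_eq_norm]
      have h6 : Metric.infDist z (W : Set H) ≤ ‖P‖ * Metric.infDist z (M' : Set H) :=
        infDist_mul_bound ⟨0, M'.zero_mem⟩ hP0 hstep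
      have h7 : Metric.infDist z (M' : Set H) ≤ gapDelta (M : Set H) (M' : Set H) * ‖z‖ :=
        infDist_le_gapDelta M M' hzM
      have h8 : gapDelta (M : Set H) (M' : Set H) ≤ δ := le_max_left _ _
      have hz0 : z = 0 := by
        have hfin : ‖z‖ ≤ ‖P‖ * δ * ‖z‖ := by
          calc ‖z‖ ≤ Metric.infDist z (W : Set H) := hnorm_le
            _ ≤ ‖P‖ * Metric.infDist z (M' : Set H) := h6
            _ ≤ ‖P‖ * (δ * ‖z‖) := by
                apply mul_le_mul_of_nonneg_left _ hP0.le
                exact le_trans h7 (mul_le_mul_of_nonneg_right h8 (norm_nonneg z))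
            _ = ‖P‖ * δ * ‖z‖ := by ring
        have hPδ : ‖P‖ * δ < 1 := by nlinarith
        by_contra hz
        have : (0:ℝ) < ‖z‖ := norm_pos_iff.mpr hz
        nlinarith
      rw [hz_def] at hz0
      have hmw : m = w := sub_eq_zero.mp hz0
      rw [hmw]
      exact hwW
  constructor
  · -- disjoint
    rw [Submodule.disjoint_def]
    intro x hx hx'
    rw [hker, LinearMap.mem_ker, ContinuousLinearMap.coe_coe] at hx
    have := hlb x hx'
    rw [hx, norm_zero] at this
    have hx0 : ‖x‖ ≤ 0 := by nlinarith
    exact norm_le_zero_iff.mp hx0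
  · -- codisjoint
    rw [codisjoint_iff, eq_top_iff]
    intro x _
    have hPx : P x ∈ M := hPr ▸ LinearMap.mem_range_self _ x
    obtain ⟨y, hy, hyPx⟩ := hMW hPx
    have h1 : x - y ∈ LinearMap.range (((1 : H →L[ℂ] H) - P : H →L[ℂ] H) : H →ₗ[ℂ] H) := by
      rw [hker, LinearMap.mem_ker, map_sub, ContinuousLinearMap.coe_coe]
      have h2 : P y = P x := hyPx
      rw [h2, sub_self]
    have hx : x = (x - y) + y := by abel
    rw [hx]
    exact Submodule.add_mem _ (Submodule.mem_sup_left h1) (Submodule.mem_sup_right hy)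
end
end
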